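/- Let k be a natural number and let T : ℕ → ℝ satisfy: T(m) ≥ 0 for all m; T(m) ≤ (m+2)^k for all m < 5; and T(m) ≤ T(m−3) + T(m−5) + m^k for all m ≥ 5. Then there exists a constant C > 0 such that T(m) ≤ C · (1.2)^m for all m. -/

import Mathlib

theorem vertex_cover_edge_recurrence_bound
    (k : ℕ) (T : ℕ → ℝ)
    (hnonneg : ∀ m, 0 ≤ T m)
    (hbase : ∀ m < 5, T m ≤ ((m : ℝ) + 2) ^ k)
    (hrec : ∀ m, 5 ≤ m → T m ≤ T (m - 3) + T (m - 5) + (m : ℝ) ^ k) :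
    ∃ C : ℝ, 0 < C ∧ ∀ m, T m ≤ C * (1.2 : ℝ) ^ m := by
  -- get a bound B with n^k ≤ B * 1.2^n
  obtain ⟨B, hB⟩ : ∃ B : ℝ, ∀ n : ℕ, ((n : ℝ)) ^ k * (1 / 1.2) ^ n ≤ B := by
    have h : Filter.Tendsto (fun n : ℕ => ((n : ℝ)) ^ k * (1 / 1.2) ^ n)
        Filter.atTop (nhds 0) := by
      have := tendsto_pow_const_mul_const_pow_of_abs_lt_one k
        (r := (1 / 1.2 : ℝ)) (by rw [abs_of_pos] <;> norm_num)
      simpa using this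
    obtain ⟨B, hB⟩ := h.bddAbove_range
    exact ⟨B, fun n => hB ⟨n, rfl⟩⟩
  have hBk : ∀ n : ℕ, ((n : ℝ)) ^ k ≤ B * (1.2 : ℝ) ^ n := by
    intro n
    have h1 : (0 : ℝ) < (1.2 : ℝ) ^ n := by positivity
    calc ((n : ℝ)) ^ k = ((n : ℝ)) ^ k * (1 / 1.2) ^ n * (1.2 : ℝ) ^ n := by
          rw [mul_assoc, div_pow, one_pow, div_mul_cancel₀ _ h1.ne', mul_one]
      _ ≤ B * (1.2 : ℝ) ^ n := by
          apply mul_le_mul_of_nonneg_right (hB n) h1.le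
  have hBpos : (0 : ℝ) < B := by
    have := hB 1
    simp at this
    linarith
  set C : ℝ := ((7 : ℝ) ^ k + B) * 7776 / 151 + 1 with hC
  have hCpos : 0 < C := by
    have : (0 : ℝ) ≤ (7 : ℝ) ^ k := by positivity
    positivity
  have h7 : (7 : ℝ) ^ k ≤ C := by
    have hb : (0 : ℝ) ≤ (7 : ℝ) ^ k := by positivity
    rw [hC]; nlinarith
  refine ⟨C, hCpos, fun m => ?_⟩
  induction m using Nat.strong_induction_on with
  | _ m ih =>
    rcases lt_or_ge m 5 with hm | hm
    · have h1 : (1 : ℝ) ≤ (1.2 : ℝ) ^ m := one_le_pow₀ (by norm_num)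
      have h2 : T m ≤ ((m : ℝ) + 2) ^ k := hbase m hm
      have h3 : ((m : ℝ) + 2) ^ k ≤ (7 : ℝ) ^ k := by
        apply pow_le_pow_left₀ (by positivity)
        have : (m : ℝ) ≤ 4 := by exact_mod_cast Nat.le_of_lt_succ hm
        linarith
      have h4 : C * 1 ≤ C * (1.2 : ℝ) ^ m := mul_le_mul_of_nonneg_left h1 hCpos.le
      calc T m ≤ ((m : ℝ) + 2) ^ k := h2
        _ ≤ (7 : ℝ) ^ k := h3
        _ ≤ C := h7
        _ = C * 1 := (mul_one C).symm
        _ ≤ C * (1.2 : ℝ) ^ m := h4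
    · have h3 : m - 3 < m := by omega
      have h5 : m - 5 < m := by omega
      have i3 := ih _ h3
      have i5 := ih _ h5
      have e3 : (1.2 : ℝ) ^ (m - 3) * (1.2 : ℝ) ^ 3 = (1.2 : ℝ) ^ m := by
        rw [← pow_add]; congr 1; omega
      have e5 : (1.2 : ℝ) ^ (m - 5) * (1.2 : ℝ) ^ 5 = (1.2 : ℝ) ^ m := by
        rw [← pow_add]; congr 1; omega
      have hx : (0 : ℝ) < (1.2 : ℝ) ^ m := by positivity
      have hmk := hBk m
      have hrm := hrec m hm
      have hCB : B ≤ C * 151 / 7776 := by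
        have hb : (0 : ℝ) ≤ (7 : ℝ) ^ k := by positivity
        rw [hC]; nlinarith
      -- combine
      have key : C * (1.2 : ℝ) ^ (m - 3) + C * (1.2 : ℝ) ^ (m - 5) + B * (1.2 : ℝ) ^ m
          ≤ C * (1.2 : ℝ) ^ m := by
        have p3 : (1.2 : ℝ) ^ (m - 3) = (1.2 : ℝ) ^ m / (1.2 : ℝ) ^ 3 := by
          field_simp [← e3]
          exact e3
        have p5 : (1.2 : ℝ) ^ (m - 5) = (1.2 : ℝ) ^ m / (1.2 : ℝ) ^ 5 := by
          field_simp [← e5]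
          exact e5
        rw [p3, p5]
        have : ((1.2 : ℝ) ^ 3) = (216 / 125 : ℝ) := by norm_num
        have : ((1.2 : ℝ) ^ 5) = (7776 / 3125 : ℝ) := by norm_num
        nlinarith [mul_pos hCpos hx, hx.le, mul_le_mul_of_nonneg_right hCB hx.le]
      linarith
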